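/- Let A* ∈ ℝ^{d×d}, let K ⊆ ℝ^{d×d} be a compact set of matrices, let μ be a probability measure on ℝ^d with ∫ ‖x‖² dμ(x) < ∞, and let X_1, X_2, … be i.i.d. ℝ^d-valued random vectors with law μ. Define f̂_n(A)(ω) = (1/(2n)) Σ_{i=1}^n ‖(A·X_i(ω) − (A*X_i(ω))⁺)⁺‖² and f(A) = (1/2)∫ ‖(A·x − (A*x)⁺)⁺‖² dμ(x). Then almost surely sup_{A ∈ K} |f̂_n(A) − f(A)| → 0 as n → ∞. -/

import Mathlib

open MeasureTheory Matrix ProbabilityTheory Filter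

set_option maxHeartbeats 1000000 in
theorem stmt16 (d : ℕ) (hd : 1 ≤ d)
    (Astar : Matrix (Fin d) (Fin d) ℝ)
    (K : Set (Matrix (Fin d) (Fin d) ℝ)) (hK : IsCompact K)
    (μ : Measure (Fin d → ℝ)) [IsProbabilityMeasure μ]
    (hmom : Integrable (fun x : Fin d → ℝ => ∑ i, (x i) ^ 2) μ)
    (Ω : Type) [MeasurableSpace Ω] (P : Measure Ω) [IsProbabilityMeasure P]
    (X : ℕ → Ω → (Fin d → ℝ)) (hmeas : ∀ n, Measurable (X n))
    (hindep : iIndepFun X P)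
    (hdist : ∀ n, P.map (X n) = μ) :
    -- single-sample loss
    let g : Matrix (Fin d) (Fin d) ℝ → (Fin d → ℝ) → ℝ :=
      fun A x => ∑ i, (max (A.mulVec x i - max (Astar.mulVec x i) 0) 0) ^ 2
    -- empirical and population objectives
    let fhat : ℕ → Matrix (Fin d) (Fin d) ℝ → Ω → ℝ :=
      fun n A ω => (1 / (2 * (n : ℝ))) * ∑ i ∈ Finset.range n, g A (X i ω)
    let f : Matrix (Fin d) (Fin d) ℝ → ℝ :=
      fun A => 2⁻¹ * ∫ x, g A x ∂μ
    ∀ᵐ ω ∂P, TendstoUniformlyOn (fun n A => fhat n A ω) f atTop K := by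
  intro g fhat f
  haveI : CompactSpace ↥K := isCompact_iff_compactSpace.mp hK
  set E := C(↥K, ℝ)
  letI : MeasurableSpace E := borel E
  haveI : BorelSpace E := ⟨rfl⟩
  -- the jointly continuous single-sample loss
  have hGc : Continuous fun p : (Fin d → ℝ) × ↥K => g (p.2 : Matrix (Fin d) (Fin d) ℝ) p.1 := by
    apply continuous_finset_sum
    intro i _
    apply Continuous.pow
    refine Continuous.max (Continuous.sub ?_ (Continuous.max ?_ continuous_const)) continuous_const
    · exact (continuous_apply i).comp
        ((Continuous.matrix_mulVec (continuous_subtype_val.comp continuous_snd) continuous_fst))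
    · exact (continuous_apply i).comp
        (Continuous.matrix_mulVec continuous_const continuous_fst)
  set G : C((Fin d → ℝ) × ↥K, ℝ) := ⟨_, hGc⟩ with hG
  set φ : (Fin d → ℝ) → E := fun x => G.curry x with hφ
  have hφc : Continuous φ := G.curry.continuous
  have hφm : Measurable φ := hφc.measurable
  have hφapp : ∀ x (A : ↥K), φ x A = g (A : Matrix (Fin d) (Fin d) ℝ) x := fun x A => rfl
  -- bound on the matrices in K
  have hMc : Continuous fun A : Matrix (Fin d) (Fin d) ℝ => ∑ i, ∑ j, (A i j) ^ 2 := by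
    apply continuous_finset_sum; intro i _
    apply continuous_finset_sum; intro j _
    exact (((continuous_apply j).comp (continuous_apply i))).pow 2
  obtain ⟨M, hM⟩ := (hK.image hMc).bddAbove
  have hM' : ∀ A ∈ K, ∑ i, ∑ j, (A i j) ^ 2 ≤ M := fun A hA => hM ⟨A, hA, rfl⟩
  set S : ℝ := ∑ i, ∑ j, (Astar i j) ^ 2 with hS
  set C : ℝ := max (2 * (M + S)) 0 with hC
  have hC0 : 0 ≤ C := le_max_right _ _
  -- the key bound, pointwise Cauchy–Schwarz estimate
  have hsq : ∀ (B : Matrix (Fin d) (Fin d) ℝ) (x : Fin d → ℝ),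
      ∑ i, (B.mulVec x i) ^ 2 ≤ (∑ i, ∑ j, (B i j) ^ 2) * ∑ j, (x j) ^ 2 := by
    intro B x
    rw [Finset.sum_mul]
    apply Finset.sum_le_sum
    intro i _
    have := Finset.sum_mul_sq_le_sq_mul_sq Finset.univ (fun j => B i j) x
    simpa [Matrix.mulVec, dotProduct] using this
  have hbound : ∀ A ∈ K, ∀ x : Fin d → ℝ, g A x ≤ C * ∑ i, (x i) ^ 2 := by
    intro A hA x
    have h1 : g A x ≤ 2 * (∑ i, (A.mulVec x i) ^ 2) + 2 * (∑ i, (Astar.mulVec x i) ^ 2) := by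
      rw [Finset.mul_sum, Finset.mul_sum, ← Finset.sum_add_distrib]
      apply Finset.sum_le_sum
      intro i _
      set a := A.mulVec x i
      set b := Astar.mulVec x i
      rcases max_cases (a - max b 0) 0 with ⟨h, _⟩ | ⟨h, _⟩ <;>
        rcases max_cases b 0 with ⟨h', _⟩ | ⟨h', _⟩ <;>
        nlinarith [sq_nonneg a, sq_nonneg b, sq_nonneg (a - b), sq_nonneg (a + b)]
    have hx0 : (0:ℝ) ≤ ∑ j, (x j) ^ 2 := Finset.sum_nonneg fun j _ => sq_nonneg _
    have h2 := hsq A x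
    have h3 := hsq Astar x
    have h4 : (∑ i, ∑ j, (A i j) ^ 2) * ∑ j, (x j) ^ 2 ≤ M * ∑ j, (x j) ^ 2 :=
      mul_le_mul_of_nonneg_right (hM' A hA) hx0
    have h5 : 2 * (M + S) * ∑ j, (x j)^2 ≤ C * ∑ j, (x j)^2 :=
      mul_le_mul_of_nonneg_right (le_max_left _ _) hx0
    nlinarith
  have hgnn : ∀ (A : Matrix (Fin d) (Fin d) ℝ) x, 0 ≤ g A x :=
    fun A x => Finset.sum_nonneg fun i _ => sq_nonneg _
  have hnorm : ∀ x : Fin d → ℝ, ‖φ x‖ ≤ C * ∑ i, (x i) ^ 2 := by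
    intro x
    rw [ContinuousMap.norm_le _ (by positivity)]
    intro A
    rw [hφapp, Real.norm_eq_abs, abs_of_nonneg (hgnn _ _)]
    exact hbound A A.2 x
  -- the random elements of C(K, ℝ)
  set Y : ℕ → Ω → E := fun n ω => φ (X n ω) with hY
  have hYsm : ∀ n, StronglyMeasurable (Y n) := by
    intro n
    rw [stronglyMeasurable_iff_measurable_separable]
    refine ⟨hφm.comp (hmeas n), ?_⟩
    have : Set.range (Y n) ⊆ φ '' Set.univ := by
      rintro - ⟨ω, rfl⟩; exact ⟨X n ω, trivial, rfl⟩
    exact (((TopologicalSpace.IsSeparable.of_separableSpace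
      (Set.univ : Set (Fin d → ℝ))).image hφc).mono this)
  -- integrability of the moment bound
  have hmomP : Integrable (fun ω => ∑ i, (X 0 ω i) ^ 2) P := by
    rw [← hdist 0] at hmom
    exact ((integrable_map_measure
      (continuous_finset_sum _ fun i _ => (continuous_apply i).pow 2).aestronglyMeasurable
      (hmeas 0).aemeasurable).mp hmom)
  have hint : Integrable (Y 0) P := by
    refine Integrable.mono' (hmomP.const_mul C) (hYsm 0).aestronglyMeasurable ?_
    exact Filter.Eventually.of_forall fun ω => hnorm (X 0 ω)
  -- i.i.d.
  have hXid : ∀ i, IdentDistrib (X i) (X 0) P P := fun i =>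
    ⟨(hmeas i).aemeasurable, (hmeas 0).aemeasurable, (hdist i).trans (hdist 0).symm⟩
  have hident : ∀ i, IdentDistrib (Y i) (Y 0) P P := fun i => (hXid i).comp hφm
  have hpind : Pairwise (Function.onFun (IndepFun · · P) Y) := fun i j hij =>
    (hindep.indepFun hij).comp hφm hφm
  -- strong law in the Banach space C(K, ℝ)
  have hslln := ProbabilityTheory.strong_law_ae Y hint hpind hident
  set EY : E := ∫ ω, Y 0 ω ∂P with hEY
  -- identification of the limit
  have hev : ∀ A : ↥K, EY A = f (A : Matrix (Fin d) (Fin d) ℝ) * 2 := by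
    intro A
    let L : E →L[ℝ] ℝ := LinearMap.mkContinuous
      { toFun := fun h : E => h A,
        map_add' := fun a b => ContinuousMap.add_apply a b A,
        map_smul' := fun c a => ContinuousMap.smul_apply c a A }
      1 (fun h => by simpa using h.norm_coe_le_norm A)
    have e1 : EY A = ∫ ω, (Y 0 ω) A ∂P := by
      have h0 := L.integral_comp_comm hint
      have hLapp : ∀ h : E, L h = h A := fun h => rfl
      rw [← hLapp EY, ← h0]
      simp only [hLapp]
    have hgA : Continuous fun x : Fin d → ℝ => g (A : Matrix (Fin d) (Fin d) ℝ) x := by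
      show Continuous fun x : Fin d → ℝ =>
        ∑ i, (max ((A : Matrix (Fin d) (Fin d) ℝ).mulVec x i - max (Astar.mulVec x i) 0) 0) ^ 2
      apply continuous_finset_sum; intro i _
      apply Continuous.pow
      refine Continuous.max (Continuous.sub ?_ (Continuous.max ?_ continuous_const))
        continuous_const
      · exact (continuous_apply i).comp (Continuous.matrix_mulVec continuous_const continuous_id)
      · exact (continuous_apply i).comp (Continuous.matrix_mulVec continuous_const continuous_id)
    have e2 : ∫ ω, (Y 0 ω) A ∂P = ∫ x, g (A : Matrix (Fin d) (Fin d) ℝ) x ∂μ := by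
      rw [← hdist 0, integral_map (hmeas 0).aemeasurable hgA.aestronglyMeasurable]
      rfl
    rw [e1, e2]
    simp [f]
    ring
  filter_upwards [hslln] with ω hω
  rw [Metric.tendstoUniformlyOn_iff]
  intro ε hε
  have hev' : ∀ᶠ n : ℕ in atTop,
      ‖(n : ℝ)⁻¹ • (∑ i ∈ Finset.range n, Y i ω) - EY‖ < ε := by
    have := tendsto_iff_norm_sub_tendsto_zero.mp hω
    exact (tendsto_order.1 this).2 ε hε
  filter_upwards [hev'] with n hn A hA
  set Z : E := (n : ℝ)⁻¹ • (∑ i ∈ Finset.range n, Y i ω) with hZ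
  have hZA : Z ⟨A, hA⟩ = (n : ℝ)⁻¹ * ∑ i ∈ Finset.range n, g A (X i ω) := by
    rw [hZ]
    rw [ContinuousMap.coe_smul, Pi.smul_apply, smul_eq_mul]
    congr 1
    rw [ContinuousMap.coe_sum, Finset.sum_apply]
    exact Finset.sum_congr rfl fun i _ => hφapp (X i ω) ⟨A, hA⟩
  have hfhat : fhat n A ω = 2⁻¹ * Z ⟨A, hA⟩ := by
    rw [hZA]
    simp only [fhat, one_div, mul_inv]
    ring
  have hfA : f A = 2⁻¹ * EY ⟨A, hA⟩ := by
    rw [hev ⟨A, hA⟩]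
    ring
  have key : |EY ⟨A, hA⟩ - Z ⟨A, hA⟩| ≤ ‖Z - EY‖ := by
    rw [← norm_neg (Z - EY), neg_sub]
    calc |EY ⟨A, hA⟩ - Z ⟨A, hA⟩| = ‖(EY - Z) ⟨A, hA⟩‖ := by
          rw [ContinuousMap.sub_apply]; rfl
    _ ≤ ‖EY - Z‖ := ContinuousMap.norm_coe_le_norm _ _
  rw [Real.dist_eq, hfhat, hfA, ← mul_sub, abs_mul]
  have : |(2:ℝ)⁻¹| * |EY ⟨A, hA⟩ - Z ⟨A, hA⟩| ≤ ‖Z - EY‖ := by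
    rw [abs_of_pos (by norm_num : (0:ℝ) < 2⁻¹)]
    nlinarith [abs_nonneg (EY ⟨A, hA⟩ - Z ⟨A, hA⟩), key]
  exact lt_of_le_of_lt this hn
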